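/- In the bidding mechanism of Hart–Mas-Colell type, if the payoff configuration (a^{g|_S}(ρ))_{S⊆N} satisfies conditions (a.1) a_i^{g|_S,i}(ρ) = v(g|_S) − Σ_{j≠i} a_j^{g|_S,i}(ρ) and (a.2) a_j^{g|_S,i}(ρ) = ρ a_j^{g|_S}(ρ) + (1−ρ) a_j^{g|_{S\i}}(ρ) for i≠j, where a^{g|_S}(ρ) = (Σ_{i∈S} w_i a^{g|_S,i}(ρ)) / (Σ_{i∈S} w_i), then a_i^{g|_S}(ρ) = (1/Σ_{j∈S} w_j) [ w_i (v(g|_S) − v(g|_{S\i})) + Σ_{j∈S,j≠i} w_j a_i^{g|_{S\j}}(ρ) ] for all i ∈ S ⊆ N. -/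
import Mathlib


open Finset

variable {n : ℕ}

/-- A network on player set `Fin n`: a finite set of (unordered) links. -/
abbrev Network (n : ℕ) := Finset (Sym2 (Fin n))

/-- The set of non-isolated players of a network. -/
def players (g : Network n) : Finset (Fin n) :=
  Finset.univ.filter (fun i => ∃ e ∈ g, i ∈ e)

/-- Harsanyi dividend of a value function at a network. -/
noncomputable def dividend (v : Network n → ℝ) (g' : Network n) : ℝ :=
  ∑ g'' ∈ g'.powerset, (-1 : ℝ) ^ (g'.card - g''.card) * v g''

/-- The weighted Myerson value. -/
noncomputable def wMV (w : Fin n → ℝ) (v : Network n → ℝ) (g : Network n) (i : Fin n) : ℝ :=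
  ∑ g' ∈ g.powerset.filter (fun g' => i ∈ players g'),
    (w i / ∑ j ∈ players g', w j) * dividend v g'

/-- Connectivity of two players through links of `g`. -/
def connectedIn (g : Network n) (i j : Fin n) : Prop :=
  Relation.ReflTransGen (fun a b => s(a, b) ∈ g) i j

open Classical in
/-- The component of `g` containing the link `e`. -/
noncomputable def component (g : Network n) (e : Sym2 (Fin n)) : Network n :=
  g.filter (fun e' => ∃ i ∈ e, ∃ j ∈ e', connectedIn g i j)

/-- The set of components (maximal connected subnetworks) of `g`. -/
noncomputable def components (g : Network n) : Finset (Network n) :=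
  g.image (component g)

/-- Component additive value functions. -/
def componentAdditive (v : Network n → ℝ) : Prop :=
  ∀ g : Network n, v g = ∑ h ∈ components g, v h

open Classical in
/-- The restriction `g|_S` of a network to a coalition `S`. -/
noncomputable def restrict (g : Network n) (S : Finset (Fin n)) : Network n :=
  g.filter (fun e => ∀ i ∈ e, i ∈ S)

/-- The set `g_i` of links of player `i` in `g`. -/
def glinks (g : Network n) (i : Fin n) : Network n :=
  g.filter (fun e => i ∈ e)

/-- In the Hart–Mas-Colell type bidding mechanism, proposals satisfying (a.1) and (a.2)
yield weighted average proposals satisfying the weighted Myerson recursion. -/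
theorem bidding_recursion (w : Fin n → ℝ) (hw : ∀ k, 0 < w k)
    (ρ : ℝ) (hρ0 : 0 ≤ ρ) (hρ1 : ρ < 1)
    (g : Network n) (v : Network n → ℝ) (hv : v ∅ = 0)
    (a : Finset (Fin n) → Fin n → Fin n → ℝ)
    (abar : Finset (Fin n) → Fin n → ℝ)
    (habar : ∀ (S : Finset (Fin n)) (j : Fin n),
      abar S j = (∑ i ∈ S, w i * a S i j) / ∑ i ∈ S, w i)
    (ha1 : ∀ S : Finset (Fin n), ∀ i ∈ S,
      a S i i = v (restrict g S) - ∑ j ∈ S.erase i, a S i j)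
    (ha2 : ∀ S : Finset (Fin n), ∀ i ∈ S, ∀ j ∈ S, j ≠ i →
      a S i j = ρ * abar S j + (1 - ρ) * abar (S.erase i) j) :
    ∀ S : Finset (Fin n), ∀ i ∈ S,
      abar S i = (1 / ∑ j ∈ S, w j) *
        (w i * (v (restrict g S) - v (restrict g (S.erase i))) +
          ∑ j ∈ S.erase i, w j * abar (S.erase j) i) := by
  have hre : restrict g (∅ : Finset (Fin n)) = ∅ := by
    rw [_root_.restrict, Finset.filter_eq_empty_iff]
    intro e _ h
    induction e using Sym2.ind with
    | _ x y => exact absurd (h x (Sym2.mem_mk_left x y)) (Finset.notMem_empty x)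
  -- efficiency of abar
  have eff : ∀ T : Finset (Fin n), ∑ j ∈ T, abar T j = v (restrict g T) := by
    intro T
    rcases T.eq_empty_or_nonempty with rfl | hT
    · simp [hre, hv]
    · have hW : (0:ℝ) < ∑ k ∈ T, w k := Finset.sum_pos (fun k _ => hw k) hT
      have key : ∀ k ∈ T, ∑ j ∈ T, a T k j = v (restrict g T) := by
        intro k hk
        rw [← Finset.add_sum_erase T _ hk, ha1 T k hk]; ring
      calc ∑ j ∈ T, abar T j
          = (∑ k ∈ T, w k * ∑ j ∈ T, a T k j) / ∑ k ∈ T, w k := by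
            simp_rw [habar, ← Finset.sum_div, Finset.mul_sum]
            rw [Finset.sum_comm]
        _ = (∑ k ∈ T, w k * v (restrict g T)) / ∑ k ∈ T, w k := by
            rw [Finset.sum_congr rfl fun k hk => by rw [key k hk]]
        _ = v (restrict g T) := by
            rw [← Finset.sum_mul]
            field_simp
  intro S i hi
  set W := ∑ j ∈ S, w j with hWdef
  have hW : (0:ℝ) < W := Finset.sum_pos (fun k _ => hw k) ⟨i, hi⟩
  have hWsplit : ∑ k ∈ S.erase i, w k = W - w i := by
    rw [hWdef, ← Finset.add_sum_erase S _ hi]; ring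
  have hmain : W * abar S i = ∑ k ∈ S, w k * a S k i := by
    rw [habar, mul_div_cancel₀ _ (ne_of_gt hW)]
  rw [← Finset.add_sum_erase S _ hi] at hmain
  -- expand a S i i
  have hii : a S i i = v (restrict g S)
      - (ρ * (v (restrict g S) - abar S i)
        + (1 - ρ) * v (restrict g (S.erase i))) := by
    rw [ha1 S i hi]
    have h1 : ∑ j ∈ S.erase i, a S i j
        = ρ * (∑ j ∈ S.erase i, abar S j)
          + (1 - ρ) * ∑ j ∈ S.erase i, abar (S.erase i) j := by
      rw [Finset.mul_sum, Finset.mul_sum, ← Finset.sum_add_distrib]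
      refine Finset.sum_congr rfl fun j hj => ?_
      exact ha2 S i hi j (Finset.mem_of_mem_erase hj) (Finset.ne_of_mem_erase hj)
    have h2 : ∑ j ∈ S.erase i, abar S j = v (restrict g S) - abar S i := by
      have := eff S
      rw [← Finset.add_sum_erase S _ hi] at this
      linarith
    rw [h1, h2, eff (S.erase i)]
  have hki : ∑ k ∈ S.erase i, w k * a S k i
      = ρ * (W - w i) * abar S i
        + (1 - ρ) * ∑ k ∈ S.erase i, w k * abar (S.erase k) i := by
    have h1 : ∀ k ∈ S.erase i, w k * a S k i
        = ρ * (w k * abar S i) + (1 - ρ) * (w k * abar (S.erase k) i) := by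
      intro k hk
      rw [ha2 S k (Finset.mem_of_mem_erase hk) i hi
        (Ne.symm (Finset.ne_of_mem_erase hk))]
      ring
    rw [Finset.sum_congr rfl h1, Finset.sum_add_distrib, ← Finset.mul_sum,
      ← Finset.mul_sum, ← Finset.sum_mul, hWsplit]
    ring
  rw [hii, hki] at hmain
  have h1ρ : (0:ℝ) < 1 - ρ := by linarith
  rw [eq_comm, one_div, inv_mul_eq_div, div_eq_iff (ne_of_gt hW), eq_comm]
  have : (1 - ρ) * (abar S i * W)
      = (1 - ρ) * (w i * (v (restrict g S) - v (restrict g (S.erase i)))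
        + ∑ j ∈ S.erase i, w j * abar (S.erase j) i) := by nlinarith [hmain]
  exact mul_left_cancel₀ (ne_of_gt h1ρ) this
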